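/- Let N ≥ 2 and let x¹, …, xᴺ ∈ ℝ be pairwise distinct. Then ∑_{i=1}^N ∑_{k≠i} 1/(x^i − x^k)² = ∑_{i=1}^N ( ∑_{k≠i} 1/(x^i − x^k) )². -/
import Mathlib


open Finset

/-- The algebraic identity \eqref{keyidentity2}:
`∑_{i=1}^N ∑_{k≠i} 1/(x^i − x^k)² = ∑_{i=1}^N (∑_{k≠i} 1/(x^i − x^k))²`. -/
theorem key_identity_two (N : ℕ) (hN : 2 ≤ N) (x : Fin N → ℝ)
    (hx : Function.Injective x) :
    ∑ i, ∑ k ∈ univ.erase i, ((x i - x k) ^ 2)⁻¹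
    = ∑ i, (∑ k ∈ univ.erase i, (x i - x k)⁻¹) ^ 2 := by
  set a : Fin N → Fin N → ℝ := fun i k => (x i - x k)⁻¹ with ha
  have hne : ∀ i k : Fin N, i ≠ k → x i - x k ≠ 0 :=
    fun i k h => sub_ne_zero_of_ne (fun e => h (hx e))
  set F : Fin N → Fin N → Fin N → ℝ :=
    fun i k l => if i ≠ k ∧ i ≠ l ∧ k ≠ l then a i k * a i l else 0 with hF
  -- the cyclic identity
  have hcyc : ∀ i k l : Fin N, F i k l + F k l i + F l i k = 0 := by
    intro i k l
    by_cases h1 : i = k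
    · subst h1; simp [hF]
    · by_cases h2 : i = l
      · subst h2; simp [hF]
      · by_cases h3 : k = l
        · subst h3; simp [hF]
        · rw [hF]
          simp only [ne_eq, h1, h2, h3, not_false_eq_true, and_self, if_true,
            Ne.symm h1, Ne.symm h2, Ne.symm h3, and_true, true_and]
          rw [ha]
          have e1 := hne i k h1
          have e2 := hne i l h2
          have e3 := hne k l h3
          have e4 := hne k i (Ne.symm h1)
          have e5 := hne l i (Ne.symm h2)
          have e6 := hne l k (Ne.symm h3)
          field_simp
          ring
  -- relabeling identities
  have hB : (∑ i, ∑ k, ∑ l, F k l i) = ∑ i, ∑ k, ∑ l, F i k l := by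
    rw [Finset.sum_comm]
    exact Finset.sum_congr rfl fun k _ => Finset.sum_comm
  have hC : (∑ i, ∑ k, ∑ l, F l i k) = ∑ i, ∑ k, ∑ l, F i k l := by
    rw [show (∑ i, ∑ k, ∑ l, F l i k) = ∑ i, ∑ l, ∑ k, F l i k from
      Finset.sum_congr rfl fun i _ => Finset.sum_comm]
    exact Finset.sum_comm
  -- the cross-term sum vanishes
  have hS : (∑ i, ∑ k, ∑ l, F i k l) = 0 := by
    have h3 : (3 : ℝ) * (∑ i, ∑ k, ∑ l, F i k l) = 0 := by
      have : (3 : ℝ) * (∑ i, ∑ k, ∑ l, F i k l)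
          = (∑ i, ∑ k, ∑ l, F i k l) + (∑ i, ∑ k, ∑ l, F k l i)
            + (∑ i, ∑ k, ∑ l, F l i k) := by
        rw [hB, hC]; ring
      rw [this, ← Finset.sum_add_distrib, ← Finset.sum_add_distrib]
      refine Finset.sum_eq_zero fun i _ => ?_
      rw [← Finset.sum_add_distrib, ← Finset.sum_add_distrib]
      refine Finset.sum_eq_zero fun k _ => ?_
      rw [← Finset.sum_add_distrib, ← Finset.sum_add_distrib]
      exact Finset.sum_eq_zero fun l _ => hcyc i k l
    linarith
  -- expand the square
  have hexp : ∀ i : Fin N, (∑ k ∈ univ.erase i, a i k) ^ 2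
      = ∑ k ∈ univ.erase i, ((x i - x k) ^ 2)⁻¹ + ∑ k, ∑ l, F i k l := by
    intro i
    rw [sq, Finset.sum_mul_sum]
    have h1 : ∀ k ∈ univ.erase i, (∑ l ∈ univ.erase i, a i k * a i l)
        = ((x i - x k) ^ 2)⁻¹ + ∑ l, F i k l := by
      intro k hk
      have hk' : k ≠ i := Finset.ne_of_mem_erase hk
      rw [← Finset.add_sum_erase _ _ hk]
      congr 1
      · rw [ha]; rw [← mul_inv, ← sq]
      · have hz : ∀ l ∈ univ, l ∉ (univ.erase i).erase k → F i k l = 0 := by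
          intro l _ hl
          rw [hF]
          simp only [Finset.mem_erase, Finset.mem_univ, and_true, not_and, not_not] at hl
          by_cases hlk : l = k
          · subst hlk; simp
          · have : l = i := hl hlk
            subst this; simp
        rw [show (∑ l, F i k l) = ∑ l ∈ (univ.erase i).erase k, F i k l from
          (Finset.sum_subset (Finset.subset_univ _) hz).symm]
        refine Finset.sum_congr rfl fun l hl => ?_
        have hlk : l ≠ k := Finset.ne_of_mem_erase hl
        have hli : l ≠ i := Finset.ne_of_mem_erase (Finset.mem_of_mem_erase hl)
        rw [hF]
        simp [Ne.symm hk', Ne.symm hlk, Ne.symm hli]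
    rw [Finset.sum_congr rfl h1, Finset.sum_add_distrib]
    congr 1
    refine Finset.sum_subset (Finset.subset_univ _) ?_
    intro k _ hk
    simp only [Finset.mem_erase, Finset.mem_univ, and_true, not_not] at hk
    subst hk
    refine Finset.sum_eq_zero fun l _ => ?_
    rw [hF]; simp
  calc ∑ i, ∑ k ∈ univ.erase i, ((x i - x k) ^ 2)⁻¹
      = ∑ i, (∑ k ∈ univ.erase i, ((x i - x k) ^ 2)⁻¹ + ∑ k, ∑ l, F i k l) := by
        rw [Finset.sum_add_distrib, hS, add_zero]
    _ = ∑ i, (∑ k ∈ univ.erase i, (x i - x k)⁻¹) ^ 2 :=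
        Finset.sum_congr rfl fun i _ => (hexp i).symm
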